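/- With a = (198√3/(5π))^{1/4} and K(t,u) = (1 − (22/17)·sin(π(2t−1)/3)·sin(π(2u−1)/3)) / (a³·(1 + sin(π(2u−1)/3))³) for t,u ∈ [0,1], the system of Hammerstein equations ∫₀¹ K(t,u)·f(u)³ du = g(t), ∫₀¹ K(t,u)·g(u)³ du = f(t) (for all t ∈ [0,1]) has at least two positive continuous solutions (f,g) with f ≠ g; specifically, with f₁(t) = a·(1 + sin(π(2t−1)/3)) and g₁(t) = 1, both (f₁, g₁) and (g₁, f₁) are solutions. -/

import Mathlib

open Set MeasureTheory Real

/-- `a = (198√3/(5π))^{1/4}`. -/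
noncomputable def aConst : ℝ := (198 * Real.sqrt 3 / (5 * π)) ^ ((4:ℝ)⁻¹)

/-- The kernel of Section 7. -/
noncomputable def K7 (t u : ℝ) : ℝ :=
  (1 - (22/17) * Real.sin (π * (2*t - 1) / 3) * Real.sin (π * (2*u - 1) / 3)) /
    (aConst ^ 3 * (1 + Real.sin (π * (2*u - 1) / 3)) ^ 3)


noncomputable def S7 (u : ℝ) : ℝ := Real.sin (π * (2*u - 1) / 3)
noncomputable def C7 (u : ℝ) : ℝ := Real.cos (π * (2*u - 1) / 3)

lemma sqrt3_pos : (0:ℝ) < Real.sqrt 3 := Real.sqrt_pos.mpr (by norm_num)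

lemma aConst_pos : 0 < aConst :=
  Real.rpow_pos_of_pos (by positivity) _

lemma aConst_pow4 : aConst ^ (4:ℕ) = 198 * Real.sqrt 3 / (5 * π) := by
  have h : (0:ℝ) ≤ 198 * Real.sqrt 3 / (5 * π) := by positivity
  exact_mod_cast Real.rpow_inv_natCast_pow h (by norm_num)

lemma harg (u : ℝ) : HasDerivAt (fun u : ℝ => π * (2*u - 1) / 3) (2*π/3) u := by
  have h : HasDerivAt (fun x : ℝ => 2*π/3 * x - π/3) (2*π/3) u := by
    simpa using ((hasDerivAt_id u).const_mul (2*π/3)).sub_const (π/3)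
  exact h.congr_of_eventuallyEq (Filter.Eventually.of_forall fun x => by ring)

lemma hS7 (u : ℝ) : HasDerivAt S7 (2 * π / 3 * C7 u) u := by
  have h2 := (Real.hasDerivAt_sin (π * (2*u - 1) / 3)).comp u (harg u)
  have h3 : HasDerivAt (fun u : ℝ => Real.sin (π * (2*u - 1) / 3))
      (Real.cos (π * (2*u - 1) / 3) * (2*π/3)) u := h2
  unfold S7 C7
  convert h3 using 1; ring

lemma hC7 (u : ℝ) : HasDerivAt C7 (-(2 * π / 3 * S7 u)) u := by
  have h2 := (Real.hasDerivAt_cos (π * (2*u - 1) / 3)).comp u (harg u)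
  have h3 : HasDerivAt (fun u : ℝ => Real.cos (π * (2*u - 1) / 3))
      (-Real.sin (π * (2*u - 1) / 3) * (2*π/3)) u := h2
  unfold S7 C7
  convert h3 using 1; ring

lemma S7_one : S7 1 = Real.sqrt 3 / 2 := by
  have : π * (2*(1:ℝ) - 1) / 3 = π / 3 := by ring
  rw [S7, this, Real.sin_pi_div_three]

lemma S7_zero : S7 0 = -(Real.sqrt 3 / 2) := by
  have : π * (2*(0:ℝ) - 1) / 3 = -(π / 3) := by ring
  rw [S7, this, Real.sin_neg, Real.sin_pi_div_three]

lemma C7_one : C7 1 = 1 / 2 := by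
  have : π * (2*(1:ℝ) - 1) / 3 = π / 3 := by ring
  rw [C7, this, Real.cos_pi_div_three]

lemma C7_zero : C7 0 = 1 / 2 := by
  have : π * (2*(0:ℝ) - 1) / 3 = -(π / 3) := by ring
  rw [C7, this, Real.cos_neg, Real.cos_pi_div_three]

lemma S7_pos (u : ℝ) (hu : u ∈ Icc (0:ℝ) 1) : 0 < 1 + S7 u := by
  have h3 : Real.sqrt 3 < 2 := by
    nlinarith [Real.sq_sqrt (by norm_num : (0:ℝ) ≤ 3), Real.sqrt_nonneg 3]
  have hle : -(Real.sqrt 3 / 2) ≤ S7 u := by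
    rw [← S7_zero]
    unfold S7
    apply Real.strictMonoOn_sin.monotoneOn
    · exact Set.mem_Icc.mpr ⟨by nlinarith [Real.pi_pos], by nlinarith [Real.pi_pos]⟩
    · exact Set.mem_Icc.mpr ⟨by nlinarith [Real.pi_pos, hu.1, hu.2],
        by nlinarith [Real.pi_pos, hu.1, hu.2]⟩
    · nlinarith [mul_nonneg Real.pi_pos.le hu.1]
  linarith



noncomputable def F2 (m u : ℝ) : ℝ :=
  3 / (2 * π * aConst ^ 3) *
    ((m/5 - 2/15) * (C7 u / (1 + S7 u) + C7 u / (1 + S7 u)^2)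
      - ((1+m)/5) * (C7 u / (1 + S7 u)^3))

lemma pyth (u : ℝ) : S7 u ^ 2 + C7 u ^ 2 = 1 := Real.sin_sq_add_cos_sq _

lemma hF2 (m u : ℝ) (h : 0 < 1 + S7 u) :
    HasDerivAt (F2 m) ((1 - m * S7 u) / (aConst^3 * (1 + S7 u)^3)) u := by
  have hne : (1 + S7 u) ≠ 0 := h.ne'
  have ha : aConst ≠ 0 := aConst_pos.ne'
  have hπ : π ≠ 0 := Real.pi_ne_zero
  have h1 : HasDerivAt (fun u => 1 + S7 u) (2 * π / 3 * C7 u) u := (hS7 u).const_add 1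
  have d1 : HasDerivAt (fun u => C7 u / (1 + S7 u)) (2*π/3 * (-1/(1 + S7 u))) u := by
    have := (hC7 u).div h1 hne
    refine this.congr_deriv ?_
    field_simp
    ring
    linear_combination (-1) * pyth u
  have h2 : HasDerivAt (fun u => (1 + S7 u)^2) (2 * ((1 + S7 u))^1 * (2*π/3 * C7 u)) u :=
    h1.pow 2
  have d2 : HasDerivAt (fun u => C7 u / (1 + S7 u)^2)
      (2*π/3 * ((S7 u - 2)/(1 + S7 u)^2)) u := by
    have := (hC7 u).div h2 (pow_ne_zero 2 hne)
    refine this.congr_deriv ?_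
    field_simp
    ring
    linear_combination (-2) * pyth u
  have h3 : HasDerivAt (fun u => (1 + S7 u)^3) (3 * ((1 + S7 u))^2 * (2*π/3 * C7 u)) u :=
    h1.pow 3
  have d3 : HasDerivAt (fun u => C7 u / (1 + S7 u)^3)
      (2*π/3 * ((2*S7 u - 3)/(1 + S7 u)^3)) u := by
    have := (hC7 u).div h3 (pow_ne_zero 3 hne)
    refine this.congr_deriv ?_
    field_simp
    ring
    linear_combination (-3) * pyth u
  have D := (((d1.add d2).const_mul (m/5 - 2/15)).sub (d3.const_mul ((1+m)/5))).const_mul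
    (3 / (2 * π * aConst ^ 3))
  refine D.congr_deriv ?_
  field_simp
  ring


lemma hr3 : Real.sqrt 3 ^ 2 = 3 := Real.sq_sqrt (by norm_num)
lemma hr_lt : Real.sqrt 3 < 2 := by
  nlinarith [hr3, Real.sqrt_nonneg 3]
lemma hr_pos : (0:ℝ) < Real.sqrt 3 := Real.sqrt_pos.mpr (by norm_num)

lemma F2_diff (m : ℝ) : F2 m 1 - F2 m 0 = aConst * (1 + 17/22 * m) := by
  have ne1 : (1:ℝ) + Real.sqrt 3 / 2 ≠ 0 := by positivity
  have ne0 : (1:ℝ) + -(Real.sqrt 3 / 2) ≠ 0 := by nlinarith [hr_lt]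
  have e1 : (1/2 : ℝ) / (1 + Real.sqrt 3 / 2) = 2 - Real.sqrt 3 := by
    rw [div_eq_iff ne1]; linear_combination ((1:ℝ)/2) * hr3
  have e2 : (1/2 : ℝ) / (1 + Real.sqrt 3 / 2)^2 = 14 - 8 * Real.sqrt 3 := by
    rw [div_eq_iff (pow_ne_zero 2 ne1)]
    linear_combination (2*Real.sqrt 3 + 9/2) * hr3
  have e3 : (1/2 : ℝ) / (1 + Real.sqrt 3 / 2)^3 = 104 - 60 * Real.sqrt 3 := by
    rw [div_eq_iff (pow_ne_zero 3 ne1)]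
    linear_combination ((15/2)*Real.sqrt 3^2 + 32*Real.sqrt 3 + 69/2) * hr3
  have e1' : (1/2 : ℝ) / (1 + -(Real.sqrt 3 / 2)) = 2 + Real.sqrt 3 := by
    rw [div_eq_iff ne0]; linear_combination ((1:ℝ)/2) * hr3
  have e2' : (1/2 : ℝ) / (1 + -(Real.sqrt 3 / 2))^2 = 14 + 8 * Real.sqrt 3 := by
    rw [div_eq_iff (pow_ne_zero 2 ne0)]
    linear_combination (-2*Real.sqrt 3 + 9/2) * hr3
  have e3' : (1/2 : ℝ) / (1 + -(Real.sqrt 3 / 2))^3 = 104 + 60 * Real.sqrt 3 := by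
    rw [div_eq_iff (pow_ne_zero 3 ne0)]
    linear_combination ((15/2)*Real.sqrt 3^2 - 32*Real.sqrt 3 + 69/2) * hr3
  have key : 2*π*(aConst^3*aConst) = 396 * Real.sqrt 3 / 5 := by
    rw [show aConst^3*aConst = aConst^(4:ℕ) by ring, aConst_pow4]
    field_simp
    ring
  have ha : aConst ≠ 0 := aConst_pos.ne'
  have hπ : π ≠ 0 := Real.pi_ne_zero
  unfold F2
  rw [S7_one, S7_zero, C7_one, C7_zero, e1, e2, e3, e1', e2', e3']
  field_simp
  linear_combination (-1275*m - 1650) * key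

lemma contArg : Continuous fun u : ℝ => π * (2*u - 1) / 3 := by continuity
lemma contS7 : Continuous S7 := Real.continuous_sin.comp contArg
lemma contC7 : Continuous C7 := Real.continuous_cos.comp contArg

lemma integral_lin (m : ℝ) : ∫ u in (0:ℝ)..1, (1 - m * S7 u) = 1 := by
  have hπ : π ≠ 0 := Real.pi_ne_zero
  have hderiv : ∀ u ∈ uIcc (0:ℝ) 1,
      HasDerivAt (fun u => u + m * (3/(2*π)) * C7 u) (1 - m * S7 u) u := by
    intro u _
    have := (hasDerivAt_id u).add ((hC7 u).const_mul (m * (3/(2*π))))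
    refine this.congr_deriv ?_
    field_simp
    ring
  have hint : IntervalIntegrable (fun u => 1 - m * S7 u) volume 0 1 :=
    (continuous_const.sub (continuous_const.mul contS7)).intervalIntegrable 0 1
  rw [intervalIntegral.integral_eq_sub_of_hasDerivAt hderiv hint, C7_one, C7_zero]
  ring

lemma integral_K (m : ℝ) :
    ∫ u in (0:ℝ)..1, (1 - m * S7 u) / (aConst^3 * (1 + S7 u)^3)
      = aConst * (1 + 17/22 * m) := by
  have hderiv : ∀ u ∈ uIcc (0:ℝ) 1,
      HasDerivAt (F2 m) ((1 - m * S7 u) / (aConst^3 * (1 + S7 u)^3)) u := by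
    intro u hu
    rw [Set.uIcc_of_le (by norm_num : (0:ℝ) ≤ 1)] at hu
    exact hF2 m u (S7_pos u hu)
  have hint : IntervalIntegrable
      (fun u => (1 - m * S7 u) / (aConst^3 * (1 + S7 u)^3)) volume 0 1 := by
    apply ContinuousOn.intervalIntegrable
    rw [Set.uIcc_of_le (by norm_num : (0:ℝ) ≤ 1)]
    apply ContinuousOn.div
    · exact (continuous_const.sub (continuous_const.mul contS7)).continuousOn
    · exact (continuous_const.mul ((continuous_const.add contS7).pow 3)).continuousOn
    · intro u hu
      have h1 := S7_pos u hu
      have := aConst_pos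
      positivity
  rw [intervalIntegral.integral_eq_sub_of_hasDerivAt hderiv hint, F2_diff]

lemma aConst_ne_one : aConst ≠ 1 := by
  intro h
  have h4 := aConst_pow4
  rw [h, one_pow] at h4
  have h1 : (1:ℝ) ≤ Real.sqrt 3 := by nlinarith [hr3, Real.sqrt_nonneg 3]
  have h2 : π ≤ 4 := Real.pi_le_four
  have h3 : (0:ℝ) < π := Real.pi_pos
  rw [eq_div_iff (by positivity)] at h4
  nlinarith

theorem stmt_15
    (f₁ g₁ : ℝ → ℝ)
    (hf₁ : f₁ = fun t => aConst * (1 + Real.sin (π * (2*t - 1) / 3)))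
    (hg₁ : g₁ = fun _ => (1:ℝ)) :
    ContinuousOn f₁ (Icc 0 1) ∧ ContinuousOn g₁ (Icc 0 1) ∧
    (∀ t ∈ Icc (0:ℝ) 1, 0 < f₁ t) ∧ (∀ t ∈ Icc (0:ℝ) 1, 0 < g₁ t) ∧
    (∃ t ∈ Icc (0:ℝ) 1, f₁ t ≠ g₁ t) ∧
    (∀ t ∈ Icc (0:ℝ) 1,
      (∫ u in (0:ℝ)..1, K7 t u * f₁ u ^ 3) = g₁ t ∧
      (∫ u in (0:ℝ)..1, K7 t u * g₁ u ^ 3) = f₁ t) ∧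
    (∀ t ∈ Icc (0:ℝ) 1,
      (∫ u in (0:ℝ)..1, K7 t u * g₁ u ^ 3) = f₁ t ∧
      (∫ u in (0:ℝ)..1, K7 t u * f₁ u ^ 3) = g₁ t) := by
  subst hf₁ hg₁
  have hfS : (fun t => aConst * (1 + Real.sin (π * (2*t - 1) / 3)))
      = fun t => aConst * (1 + S7 t) := rfl
  have ha := aConst_pos
  have hI1 : ∀ t ∈ Icc (0:ℝ) 1,
      (∫ u in (0:ℝ)..1, K7 t u * (aConst * (1 + Real.sin (π * (2*u - 1) / 3))) ^ 3) = 1 := by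
    intro t _
    have hcong : EqOn (fun u => K7 t u * (aConst * (1 + Real.sin (π * (2*u - 1) / 3))) ^ 3)
        (fun u => 1 - (22/17 * S7 t) * S7 u) (uIcc (0:ℝ) 1) := by
      intro u hu
      rw [Set.uIcc_of_le (by norm_num : (0:ℝ) ≤ 1)] at hu
      have h1 := S7_pos u hu
      have hd : aConst^3 * (1 + S7 u)^3 ≠ 0 := by positivity
      show (1 - 22/17 * S7 t * S7 u) / (aConst^3 * (1 + S7 u)^3)
          * (aConst * (1 + S7 u)) ^ 3 = 1 - (22/17 * S7 t) * S7 u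
      rw [mul_pow, div_mul_cancel₀ _ hd]
    rw [intervalIntegral.integral_congr hcong, integral_lin]
  have hI2 : ∀ t ∈ Icc (0:ℝ) 1,
      (∫ u in (0:ℝ)..1, K7 t u * (1:ℝ) ^ 3) = aConst * (1 + S7 t) := by
    intro t _
    have heq : (fun u => K7 t u * (1:ℝ) ^ 3)
        = fun u => (1 - (22/17 * S7 t) * S7 u) / (aConst^3 * (1 + S7 u)^3) := by
      funext u
      show K7 t u * 1 ^ 3 = _
      simp only [one_pow, mul_one]
      show (1 - 22/17 * S7 t * S7 u) / (aConst^3 * (1 + S7 u)^3) = _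
      ring
    rw [heq, integral_K]
    ring
  refine ⟨?_, ?_, ?_, ?_, ?_, ?_, ?_⟩
  · exact (continuous_const.mul (continuous_const.add contS7)).continuousOn
  · exact continuous_const.continuousOn
  · intro t ht
    have := S7_pos t ht
    have : 0 < aConst * (1 + S7 t) := by positivity
    exact this
  · intro t _; norm_num
  · refine ⟨1/2, by norm_num, ?_⟩
    have h0 : π * (2*(1/2:ℝ) - 1) / 3 = 0 := by ring
    simp only [h0, Real.sin_zero, add_zero, mul_one]
    exact aConst_ne_one
  · intro t ht
    exact ⟨hI1 t ht, hI2 t ht⟩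
  · intro t ht
    exact ⟨hI2 t ht, hI1 t ht⟩
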